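/- Let Γ be a group having a maximal subgroup N which is not normal in Γ and which admits a surjective group homomorphism onto the free group F_∞ of countably infinite rank. Then Γ has the countable automorphism realisation property: for every countable group A there exists a subgroup M of Γ such that N_Γ(M)/M is isomorphic to A. -/

import Mathlib

/-- Proposition on the CARP. If `Γ` has a non-normal maximal subgroup `N`
with an epimorphism `N → F_∞`, then every countable group `A` is isomorphic to `N_Γ(M)/M`
for some subgroup `M ≤ Γ`. -/
theorem carp_of_maximal_subgroup
    {Γ : Type*} [Group Γ] (N : Subgroup Γ) (hmax : IsCoatom N) (hnn : ¬ N.Normal)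
    (φ : N →* FreeGroup ℕ) (hφ : Function.Surjective φ) :
    ∀ (A : Type*) [Group A] [Countable A], ∃ M : Subgroup Γ,
      Nonempty ((Subgroup.normalizer (M : Set Γ) ⧸ M.subgroupOf (Subgroup.normalizer (M : Set Γ))) ≃* A) := by
  intro A _ _
  -- Since `N` is not normal, pick `c ∈ N` with a conjugate outside `N`.
  have hc : ∃ c, ∃ (_ : c ∈ N), ∃ g, g * c * g⁻¹ ∉ N := by
    by_contra h
    push_neg at h
    exact hnn ⟨fun n hn g => h n hn g⟩
  obtain ⟨c, hcN, g, hg⟩ := hc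
  obtain ⟨f, hf⟩ := exists_surjective_nat A
  set w : FreeGroup ℕ := φ ⟨c, hcN⟩ with hw
  set S : Finset ℕ := (w.toWord.map Prod.fst).toFinset with hS
  set n : ℕ := S.sup id + 1 with hn
  set ψ : FreeGroup ℕ →* A :=
    FreeGroup.lift (fun i => if i < n then 1 else f (i - n)) with hψ
  have hψsurj : Function.Surjective ψ := by
    intro a
    obtain ⟨k, hk⟩ := hf a
    refine ⟨FreeGroup.of (k + n), ?_⟩
    rw [hψ]
    simp only [FreeGroup.lift_apply_of]
    rw [if_neg (by omega)]
    simpa using hk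
  have hψw : ψ w = 1 := by
    conv_lhs => rw [← FreeGroup.mk_toWord (x := w)]
    rw [hψ, FreeGroup.lift_mk]
    apply List.prod_eq_one
    intro x hx
    simp only [List.mem_map] at hx
    obtain ⟨⟨i, b⟩, hmem, rfl⟩ := hx
    have hiS : i ∈ S := by
      rw [hS, List.mem_toFinset, List.mem_map]
      exact ⟨(i, b), hmem, rfl⟩
    have hi : i < n := by
      have := Finset.le_sup (f := id) hiS
      simp only [id] at this
      omega
    simp [hi]
  set χ : N →* A := ψ.comp φ with hχ
  have hχsurj : Function.Surjective χ := hψsurj.comp hφ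
  set M : Subgroup Γ := χ.ker.map N.subtype with hM
  have hML : M ≤ N := by
    rw [hM]; exact Subgroup.map_subtype_le χ.ker
  have hcM : c ∈ M := by
    have h1 : χ ⟨c, hcN⟩ = 1 := by
      rw [hχ, MonoidHom.comp_apply, ← hw]; exact hψw
    exact ⟨⟨c, hcN⟩, MonoidHom.mem_ker.mpr h1, rfl⟩
  have key : ∀ x ∈ N, ∀ h ∈ M, x * h * x⁻¹ ∈ M := by
    intro x hx h hh
    rw [hM] at hh ⊢
    obtain ⟨⟨h, hhN⟩, hker, rfl⟩ := hh
    refine ⟨⟨x, hx⟩ * ⟨h, hhN⟩ * ⟨x, hx⟩⁻¹, ?_, rfl⟩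
    exact χ.normal_ker.conj_mem _ hker ⟨x, hx⟩
  have hNle : N ≤ Subgroup.normalizer (M : Set Γ) := by
    intro x hx
    rw [Subgroup.mem_normalizer_iff]
    intro h
    constructor
    · exact fun hh => key x hx h hh
    · intro hh
      have := key x⁻¹ (N.inv_mem hx) _ hh
      simpa [mul_assoc] using this
  have hnorm : Subgroup.normalizer (M : Set Γ) = N := by
    rcases eq_or_lt_of_le hNle with h | h
    · exact h.symm
    · exfalso
      have htop : Subgroup.normalizer (M : Set Γ) = ⊤ := hmax.2 _ h
      have hMnormal : M.Normal := Subgroup.normalizer_eq_top_iff.mp htop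
      exact hg (hML (hMnormal.conj_mem c hcM g))
  have hsub : M.subgroupOf N = χ.ker := by
    rw [hM, Subgroup.subgroupOf]
    exact Subgroup.comap_map_eq_self_of_injective N.subtype_injective _
  refine ⟨M, ?_⟩
  clear_value M χ ψ n S w
  clear hM hχ hψw hψsurj hcM key hNle hML hψ hn hS hw
  clear ψ n S w hf f hg g hcN c hφ φ hmax hnn
  subst hnorm
  exact ⟨(QuotientGroup.quotientMulEquivOfEq hsub).trans
    (QuotientGroup.quotientKerEquivOfSurjective χ hχsurj)⟩
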